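/- For a single element a ∈ A, the reduced linearised coproduct of the double tensor algebra on the word a^l (the l-fold tensor power) is Δ̄(a^l) = Σ_{k=1}^{l−1} (k+1) a^k ⊗ a^{l−k}, and its (n−1)-fold left iteration satisfies Δ̄^{[n−1]}(a^n) = n! · a^{⊗n}. -/

import Mathlib

open scoped TensorProduct Classical

variable (k A : Type*) [Field k] [Ring A] [Algebra k A]

/-- The tensor algebra `T(A)` (together with the empty word), modelled as the free
`k`-module on the set of words with letters in `A`. -/
def TA (k A : Type*) [CommRing k] : Type _ := List A →₀ k

noncomputable instance : AddCommGroup (TA k A) := inferInstanceAs (AddCommGroup (List A →₀ k))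
noncomputable instance : Module k (TA k A) := inferInstanceAs (Module k (List A →₀ k))

/-- The word `a₁⋯a_n` as a basis element of `T(A)`. -/
noncomputable def wrd (l : List A) : TA k A := Finsupp.single l 1

/-- The reduced linearised coproduct on a word:
`Δ̄(a₁⋯a_n) = Σ_{I₁⊔I₂⊔I₃ = [n], I₂ ≠ ∅, I₁⊔I₃ ≠ ∅} a_{I₁I₃} ⊗ a_{I₂}`,
summed over decompositions of `[n]` into three consecutive intervals
`I₁ = {1,…,p₁}`, `I₂ = {p₁+1,…,p₁+p₂}`, `I₃ = {p₁+p₂+1,…,n}`. -/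
noncomputable def dbarWord (l : List A) : TA k A ⊗[k] TA k A :=
  ∑ p ∈ Finset.range (l.length + 1) ×ˢ Finset.range (l.length + 1),
    if 1 ≤ p.2 ∧ p.1 + p.2 ≤ l.length ∧ ¬(p.1 = 0 ∧ p.2 = l.length) then
      wrd k A (l.take p.1 ++ l.drop (p.1 + p.2)) ⊗ₜ[k] wrd k A ((l.drop p.1).take p.2)
    else 0

/-- The reduced linearised coproduct `Δ̄ : T(A) → T(A) ⊗ T(A)` as a linear map. -/
noncomputable def dbar : TA k A →ₗ[k] TA k A ⊗[k] TA k A :=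
  Finsupp.lsum k fun l =>
    LinearMap.toSpanSingleton k (TA k A ⊗[k] TA k A) (dbarWord k A l)

/-- The `q`-fold left-iterated reduced linearised coproduct
`Δ̄^{[q]} = (Δ̄^{[q-1]} ⊗ id) ∘ Δ̄ : T(A) → T(A)^{⊗(q+1)}`, `Δ̄^{[0]} = id`. -/
noncomputable def iterDbar : (q : ℕ) → (TA k A →ₗ[k] ⨂[k] (_ : Fin (q + 1)), TA k A)
  | 0 => (PiTensorProduct.subsingletonEquiv (R := k) (s := fun _ : Fin 1 => TA k A) (0 : Fin 1)).symm.toLinearMap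
  | q + 1 =>
    (PiTensorProduct.reindex k (fun _ => TA k A) finSumFinEquiv).toLinearMap.comp
      ((PiTensorProduct.tmulEquiv (R := k) (M := TA k A)).toLinearMap.comp
        ((TensorProduct.map (iterDbar q)
            (PiTensorProduct.subsingletonEquiv (R := k) (s := fun _ : Fin 1 => TA k A) (0 : Fin 1)).symm.toLinearMap).comp
          (dbar k A)))

lemma dbar_wrd (l : List A) : dbar k A (wrd k A l) = dbarWord k A l := by
  rw [dbar, wrd]
  erw [Finsupp.lsum_single]
  rw [LinearMap.toSpanSingleton_apply, one_smul]

lemma dbarWord_replicate (a : A) (l : ℕ) :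
    dbarWord k A (List.replicate l a) =
      ∑ j ∈ Finset.Ioo 0 l, ((j + 1 : ℕ) : k) •
        (wrd k A (List.replicate j a) ⊗ₜ[k] wrd k A (List.replicate (l - j) a)) := by
  rw [dbarWord, List.length_replicate, Finset.sum_product_right]
  have step1 : ∀ p2 ∈ Finset.range (l + 1),
      (∑ p1 ∈ Finset.range (l + 1),
        if 1 ≤ (p1, p2).2 ∧ (p1, p2).1 + (p1, p2).2 ≤ l ∧ ¬((p1, p2).1 = 0 ∧ (p1, p2).2 = l) then
          wrd k A ((List.replicate l a).take (p1, p2).1 ++ (List.replicate l a).drop ((p1, p2).1 + (p1, p2).2)) ⊗ₜ[k]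
            wrd k A (((List.replicate l a).drop (p1, p2).1).take (p1, p2).2)
        else 0) =
      if p2 ∈ Finset.Ioo 0 l then
        (l - p2 + 1) • (wrd k A (List.replicate (l - p2) a) ⊗ₜ[k] wrd k A (List.replicate p2 a)) else 0 := by
    intro p2 hp2
    simp only [Finset.mem_range] at hp2
    by_cases h : p2 ∈ Finset.Ioo 0 l
    · simp only [Finset.mem_Ioo] at h
      rw [if_pos (Finset.mem_Ioo.2 h)]
      have : ∀ p1 ∈ Finset.range (l + 1),
          (if 1 ≤ p2 ∧ p1 + p2 ≤ l ∧ ¬(p1 = 0 ∧ p2 = l) then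
            wrd k A ((List.replicate l a).take p1 ++ (List.replicate l a).drop (p1 + p2)) ⊗ₜ[k]
              wrd k A (((List.replicate l a).drop p1).take p2)
          else 0) =
          if p1 ∈ Finset.range (l - p2 + 1) then
            wrd k A (List.replicate (l - p2) a) ⊗ₜ[k] wrd k A (List.replicate p2 a) else 0 := by
        intro p1 _
        by_cases hp1 : p1 ≤ l - p2
        · rw [if_pos (Finset.mem_range.2 (by omega)), if_pos ⟨h.1, by omega, by omega⟩]
          rw [List.take_replicate, List.drop_replicate, List.drop_replicate, List.take_replicate,
            ← List.replicate_add]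
          have h1 : p1 ⊓ l = p1 := by omega
          have h2 : p2 ⊓ (l - p1) = p2 := by omega
          have h3 : p1 + (l - (p1 + p2)) = l - p2 := by omega
          rw [h1, h2, h3]
        · rw [if_neg (by omega), if_neg (by simp; omega)]
      rw [Finset.sum_congr rfl this, Finset.sum_ite_mem, Finset.inter_eq_right.2
        (Finset.range_subset_range.2 (by omega)), Finset.sum_const, Finset.card_range]
    · rw [if_neg h]
      simp only [Finset.mem_Ioo] at h
      push_neg at h
      apply Finset.sum_eq_zero
      intro p1 _
      rw [if_neg]
      push_neg
      intro h1 h2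
      constructor <;> omega
  rw [Finset.sum_congr rfl step1, Finset.sum_ite_mem, Finset.inter_eq_right.2 (by
    intro x hx; simp only [Finset.mem_Ioo] at hx; exact Finset.mem_range.2 (by omega))]
  apply Finset.sum_nbij' (fun j => l - j) (fun j => l - j)
  · intro a ha; simp only [Finset.mem_Ioo] at *; omega
  · intro a ha; simp only [Finset.mem_Ioo] at *; omega
  · intro a ha; simp only [Finset.mem_Ioo] at ha; omega
  · intro a ha; simp only [Finset.mem_Ioo] at ha; omega
  · intro j hj
    simp only [Finset.mem_Ioo] at hj
    have h1 : l - (l - j) = j := by omega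
    rw [h1, Nat.cast_smul_eq_nsmul]

lemma dbar_rep (a : A) (l : ℕ) :
    dbar k A (wrd k A (List.replicate l a)) =
      ∑ j ∈ Finset.Ioo 0 l, ((j + 1 : ℕ) : k) •
        (wrd k A (List.replicate j a) ⊗ₜ[k] wrd k A (List.replicate (l - j) a)) := by
  rw [dbar_wrd, dbarWord_replicate]

lemma iterDbar_rep_zero (a : A) : ∀ q j, 1 ≤ j → j ≤ q →
    iterDbar k A q (wrd k A (List.replicate j a)) = 0 := by
  intro q
  induction q with
  | zero => intro j h1 h2; omega
  | succ q ih =>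
    intro j h1 h2
    rw [iterDbar]
    simp only [LinearMap.comp_apply, dbar_rep, map_sum, LinearEquiv.coe_coe]
    apply Finset.sum_eq_zero
    intro t ht
    simp only [Finset.mem_Ioo] at ht
    rw [map_smul, TensorProduct.map_tmul, ih t ht.1 (by omega), TensorProduct.zero_tmul,
      smul_zero, map_zero, map_zero]

lemma iterDbar_rep (a : A) (m : ℕ) :
    iterDbar k A m (wrd k A (List.replicate (m + 1) a)) =
      ((m + 1).factorial : k) •
        PiTensorProduct.tprod k fun _ : Fin (m + 1) => wrd k A [a] := by
  induction m with
  | zero =>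
    rw [iterDbar, List.replicate_one, Nat.factorial_one, Nat.cast_one, one_smul,
      LinearEquiv.coe_toLinearMap, LinearEquiv.symm_apply_eq,
      PiTensorProduct.subsingletonEquiv_apply_tprod]
  | succ m ih =>
    rw [iterDbar]
    simp only [LinearMap.comp_apply, dbar_rep, map_sum, LinearEquiv.coe_coe]
    rw [Finset.sum_eq_single (m + 1)]
    · rw [map_smul, TensorProduct.map_tmul, ih]
      have h1 : m + 1 + 1 - (m + 1) = 1 := by omega
      rw [h1, List.replicate_one, LinearEquiv.coe_toLinearMap]
      have h2 : ((PiTensorProduct.subsingletonEquiv (R := k) (s := fun _ : Fin 1 => TA k A) (0 : Fin 1)).symm (wrd k A [a]))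
          = PiTensorProduct.tprod k fun _ : Fin 1 => wrd k A [a] := by
        rw [LinearEquiv.symm_apply_eq, PiTensorProduct.subsingletonEquiv_apply_tprod]
      rw [h2, ← TensorProduct.smul_tmul', smul_smul, map_smul, map_smul,
        PiTensorProduct.tmulEquiv_apply, PiTensorProduct.reindex_tprod]
      have h3 : (fun i => Sum.elim (fun _ : Fin (m + 1) => wrd k A [a])
          (fun _ : Fin 1 => wrd k A [a]) (finSumFinEquiv.symm i))
          = fun _ : Fin (m + 1 + 1) => wrd k A [a] := by
        funext i
        cases finSumFinEquiv.symm i <;> rfl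
      rw [h3]
      congr 1
      push_cast [Nat.factorial_succ]
      ring
    · intro t ht hne
      simp only [Finset.mem_Ioo] at ht
      rw [map_smul, TensorProduct.map_tmul, iterDbar_rep_zero k A a m t ht.1 (by omega),
        TensorProduct.zero_tmul, smul_zero, map_zero, map_zero]
    · intro h
      exact absurd (Finset.mem_Ioo.2 ⟨by omega, by omega⟩) h

/-- for a single `a ∈ A`, the reduced linearised coproduct satisfies
`Δ̄(a^l) = Σ_{j=1}^{l−1} (j+1) a^j ⊗ a^{l−j}`, and its left iterates satisfy
`Δ̄^{[n−1]}(a^n) = n! · a^{⊗n}` (here stated for `n = m + 1`, i.e. all `n ≥ 1`). -/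
theorem dbar_replicate (a : A) :
    (∀ l : ℕ, dbar k A (wrd k A (List.replicate l a)) =
        ∑ j ∈ Finset.Ioo 0 l, ((j + 1 : ℕ) : k) •
          (wrd k A (List.replicate j a) ⊗ₜ[k] wrd k A (List.replicate (l - j) a)))
    ∧ (∀ m : ℕ, iterDbar k A m (wrd k A (List.replicate (m + 1) a)) =
        ((m + 1).factorial : k) •
          PiTensorProduct.tprod k fun _ : Fin (m + 1) => wrd k A [a]) :=
  ⟨fun l => dbar_rep k A a l, fun m => iterDbar_rep k A a m⟩
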